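/- Let r = 2^n and let u_0, ..., u_{2^n−1} ∈ {−1,+1}^{2^n} be the pairwise orthogonal vectors from the Sylvester–Hadamard construction. Then ∑_{k=0}^{2^n−1} Toep(u_k)ᵀ Toep(u_k) = 2^n · diag(2^n, 2^n−1, ..., 1). -/

import Mathlib

lemma neg_one_pow_mod (x : ℕ) : (-1:ℝ)^x = (-1)^(x % 2) := by
  conv_lhs => rw [← Nat.div_add_mod x 2]
  rw [pow_add, pow_mul]
  simp

lemma mod_two_pow_eq_zero_iff (c m : ℕ) :
    c % 2^m = 0 ↔ ∀ j < m, Nat.testBit c j = false := by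
  constructor
  · intro h j hj
    have : Nat.testBit (c % 2^m) j = false := by rw [h]; simp
    simpa [Nat.testBit_mod_two_pow, hj] using this
  · intro h
    apply Nat.eq_of_testBit_eq
    intro j
    simp only [Nat.testBit_mod_two_pow, Nat.zero_testBit]
    by_cases hj : j < m
    · simp [hj, h j hj]
    · simp [hj]

lemma walsh (n c : ℕ) :
    ∑ k ∈ Finset.range (2^n), ((-1:ℝ)^(∑ j ∈ Finset.range n,
      if Nat.testBit k j && Nat.testBit c j then 1 else 0))
    = if c % 2^n = 0 then (2:ℝ)^n else 0 := by
  induction n with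
  | zero => simp [Nat.mod_one]
  | succ n ih =>
    have hsplit : Finset.range (2^(n+1)) = Finset.range (2^n) ∪ Finset.Ico (2^n) (2^(n+1)) := by
      rw [Finset.range_eq_Ico, Finset.range_eq_Ico, Finset.Ico_union_Ico_eq_Ico (Nat.zero_le _)
        (Nat.pow_le_pow_right (by norm_num : 0 < 2) (Nat.le_add_right n 1))]
    rw [hsplit, Finset.sum_union (by
      rw [Finset.range_eq_Ico]; exact Finset.Ico_disjoint_Ico_consecutive 0 _ _)]
    have h1 : ∑ k ∈ Finset.range (2^n), ((-1:ℝ)^(∑ j ∈ Finset.range (n+1),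
        if Nat.testBit k j && Nat.testBit c j then 1 else 0))
        = if c % 2^n = 0 then (2:ℝ)^n else 0 := by
      rw [← ih]
      apply Finset.sum_congr rfl
      intro k hk
      simp only [Finset.mem_range] at hk
      rw [Finset.sum_range_succ, Nat.testBit_lt_two_pow hk]
      simp
    have h2 : ∑ k ∈ Finset.Ico (2^n) (2^(n+1)), ((-1:ℝ)^(∑ j ∈ Finset.range (n+1),
        if Nat.testBit k j && Nat.testBit c j then 1 else 0))
        = (-1:ℝ)^(if Nat.testBit c n then 1 else 0) *
          (if c % 2^n = 0 then (2:ℝ)^n else 0) := by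
      rw [Finset.sum_Ico_eq_sum_range, ← ih, Finset.mul_sum]
      have hlen : 2^(n+1) - 2^n = 2^n := by rw [pow_succ]; omega
      rw [hlen]
      apply Finset.sum_congr rfl
      intro k hk
      simp only [Finset.mem_range] at hk
      have hb : ∀ j < n, Nat.testBit (2^n + k) j = Nat.testBit k j := by
        intro j hj; exact Nat.testBit_two_pow_add_gt hj k
      have hbn : Nat.testBit (2^n + k) n = true := by
        rw [Nat.testBit_two_pow_add_eq, Nat.testBit_lt_two_pow hk]; rfl
      rw [Finset.sum_range_succ, hbn]
      rw [Finset.sum_congr rfl (fun j hj => by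
        rw [hb j (Finset.mem_range.mp hj)])]
      rw [pow_add, mul_comm]
      congr 1
    rw [h1, h2]
    by_cases hc : Nat.testBit c n
    · have hne : ¬ c % 2^(n+1) = 0 := by
        rw [mod_two_pow_eq_zero_iff]
        push_neg
        exact ⟨n, Nat.lt_succ_self n, by simp [hc]⟩
      simp only [hc, if_true, pow_one, if_neg hne]
      ring
    · have : (c % 2^(n+1) = 0) ↔ (c % 2^n = 0) := by
        rw [mod_two_pow_eq_zero_iff, mod_two_pow_eq_zero_iff]
        constructor
        · intro h j hj; exact h j (Nat.lt_succ_of_lt hj)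
        · intro h j hj
          rcases Nat.lt_succ_iff_lt_or_eq.mp hj with h' | rfl
          · exact h j h'
          · simpa using hc
      simp only [Bool.not_eq_true] at hc
      simp only [hc, Bool.false_eq_true, if_false, pow_zero, one_mul]
      by_cases hc0 : c % 2^n = 0
      · rw [if_pos hc0, if_pos (this.mpr hc0), pow_succ]; ring
      · rw [if_neg hc0, if_neg (fun h => hc0 (this.mp h))]; ring


open Matrix

/-- Lower-triangular Toeplitz matrix with first column `v`. -/
def ToepR {T : ℕ} (v : Fin T → ℝ) : Matrix (Fin T) (Fin T) ℝ :=
  fun k ℓ => if (ℓ : ℕ) ≤ (k : ℕ) then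
    v ⟨(k : ℕ) - (ℓ : ℕ), lt_of_le_of_lt (Nat.sub_le _ _) k.isLt⟩ else 0

/-- The `k`-th vector of the Sylvester--Hadamard construction of `2^n` pairwise
orthogonal vectors in `{-1,+1}^{2^n}`: the `i`-th entry is `(-1)` raised to the
bitwise inner product of `k` and `i`. -/
def sylvester (n : ℕ) (k : Fin (2 ^ n)) : Fin (2 ^ n) → ℝ := fun i =>
  (-1 : ℝ) ^ (∑ j ∈ Finset.range n,
    if Nat.testBit (k : ℕ) j && Nat.testBit (i : ℕ) j then 1 else 0)

lemma sylvester_orth (n : ℕ) (a b : Fin (2 ^ n)) :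
    ∑ k : Fin (2 ^ n), sylvester n k a * sylvester n k b
      = if a = b then (2:ℝ)^n else 0 := by
  have key : ∀ k : Fin (2 ^ n), sylvester n k a * sylvester n k b =
      (-1:ℝ)^(∑ j ∈ Finset.range n,
        if Nat.testBit (k:ℕ) j && Nat.testBit ((a:ℕ) ^^^ (b:ℕ)) j then 1 else 0) := by
    intro k
    unfold sylvester
    rw [← pow_add, neg_one_pow_mod, neg_one_pow_mod (∑ j ∈ Finset.range n,
        if Nat.testBit (k:ℕ) j && Nat.testBit ((a:ℕ) ^^^ (b:ℕ)) j then 1 else 0)]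
    congr 1
    rw [← Finset.sum_add_distrib, Finset.sum_nat_mod, Finset.sum_nat_mod
      (Finset.range n) 2 (fun j => if Nat.testBit (k:ℕ) j && Nat.testBit ((a:ℕ) ^^^ (b:ℕ)) j then 1 else 0)]
    congr 1
    apply Finset.sum_congr rfl
    intro j _
    cases hk : Nat.testBit (k:ℕ) j <;> cases ha : Nat.testBit (a:ℕ) j <;>
      cases hb : Nat.testBit (b:ℕ) j <;>
      simp [Nat.testBit_xor, hk, ha, hb]
  rw [Finset.sum_congr rfl (fun k _ => key k)]
  rw [Fin.sum_univ_eq_sum_range (fun k => (-1:ℝ)^(∑ j ∈ Finset.range n,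
      if Nat.testBit k j && Nat.testBit ((a:ℕ) ^^^ (b:ℕ)) j then 1 else 0))]
  rw [walsh, Nat.mod_eq_of_lt (Nat.xor_lt_two_pow a.isLt b.isLt)]
  by_cases h : a = b
  · subst h
    simp
  · have hx : (a:ℕ) ^^^ (b:ℕ) ≠ 0 := fun hx => h (Fin.ext (xor_eq_zero_iff.mp hx))
    simp [h, hx]

theorem sylvester_toeplitz_gram (n : ℕ) :
    ∑ k : Fin (2 ^ n), (ToepR (sylvester n k)).transpose * ToepR (sylvester n k) =
      ((2 : ℝ) ^ n) • Matrix.diagonal (fun i : Fin (2 ^ n) => (2 : ℝ) ^ n - (i : ℕ)) := by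
  ext i j
  simp only [Matrix.sum_apply, Matrix.mul_apply, Matrix.transpose_apply]
  rw [Finset.sum_comm]
  have inner : ∀ m : Fin (2^n),
      ∑ k : Fin (2^n), ToepR (sylvester n k) m i * ToepR (sylvester n k) m j
      = if (i:ℕ) ≤ (m:ℕ) ∧ (j:ℕ) ≤ (m:ℕ) then (if i = j then (2:ℝ)^n else 0) else 0 := by
    intro m
    unfold ToepR
    by_cases hi : (i:ℕ) ≤ (m:ℕ) <;> by_cases hj : (j:ℕ) ≤ (m:ℕ)
    · rw [if_pos ⟨hi, hj⟩]
      simp only [hi, hj, if_true]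
      rw [sylvester_orth]
      by_cases hij : i = j
      · subst hij
        simp
      · have hne : (⟨(m:ℕ) - (i:ℕ), lt_of_le_of_lt (Nat.sub_le _ _) m.isLt⟩ : Fin (2^n))
            ≠ ⟨(m:ℕ) - (j:ℕ), lt_of_le_of_lt (Nat.sub_le _ _) m.isLt⟩ := by
          intro hcontra
          have hv : (m:ℕ) - (i:ℕ) = (m:ℕ) - (j:ℕ) := congrArg Fin.val hcontra
          exact hij (Fin.ext (by omega))
        rw [if_neg hne, if_neg hij]
    · rw [if_neg (by tauto)]; simp [hj]
    · rw [if_neg (by tauto)]; simp [hi]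
    · rw [if_neg (by tauto)]; simp [hi]
  rw [Finset.sum_congr rfl (fun m _ => inner m)]
  by_cases hij : i = j
  · subst hij
    simp only [and_self, Matrix.smul_apply, Matrix.diagonal_apply_eq, smul_eq_mul, if_pos rfl, if_true]
    rw [Fin.sum_univ_eq_sum_range (fun m => if (i:ℕ) ≤ m then (2:ℝ)^n else 0)]
    rw [Finset.sum_ite, Finset.sum_const, Finset.sum_const_zero, add_zero]
    have hfil : Finset.filter (fun m => (i:ℕ) ≤ m) (Finset.range (2^n))
        = Finset.Ico (i:ℕ) (2^n) := by
      ext m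
      simp [Finset.mem_filter, Finset.mem_Ico, and_comm]
    rw [hfil, Nat.card_Ico, nsmul_eq_mul]
    rw [Nat.cast_sub (le_of_lt i.isLt)]
    push_cast
    ring
  · simp only [if_neg hij, ite_self, Finset.sum_const_zero]
    rw [Matrix.smul_apply, Matrix.diagonal_apply_ne _ hij, smul_zero]
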